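/- Let T be a rank-one infinite measure preserving (C,F) transformation of ℤ: X is the (C,F)-space built from F_n = {0,…,h_n−1} ⊆ ℤ and cut sets C_n ⊆ ℤ, with invariant measure μ normalized by μ([0]_0) = 1. Then for arbitrary measurable subsets A, B ⊆ [0]_0, Σ_{k=0}^{h_l−1} μ(A ∩ T_k B) ≤ 2·min(μ(A), μ(B)) · Σ_{k=0}^{h_l−1} μ([0]_0 ∩ T_k [0]_0) for every l ≥ 1. -/

import Mathlib

open MeasureTheory Filter Topology
open scoped ENNReal

/-- Lemma 2.3: for a rank-one infinite measure preserving (C,F) transformation with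
base `Y = [0]_0` of measure `1`, level-index set `C` at stage `l` and height `h = h_l`,
the correlation sums of arbitrary subsets of the base are dominated by twice the
minimum of the measures times the correlation sums of the base. -/
theorem stmt10 {X : Type*} [MeasurableSpace X] (μ : Measure X) [SigmaFinite μ]
    (hinf : μ Set.univ = ⊤)
    (T : ℤ → X → X) (hmp : ∀ g, MeasurePreserving (T g) μ μ)
    (hadd : ∀ g h x, T (g + h) x = T g (T h x)) (hzero : ∀ x, T 0 x = x)
    (Y V₀ : Set X) (hYmeas : MeasurableSet Y) (hV₀ : MeasurableSet V₀)
    (hμY : μ Y = 1)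
    (C : Finset ℤ) (hCne : C.Nonempty)
    (h : ℕ) (hpos : 0 < h)
    (hbase : Y = ⋃ c ∈ C, T c '' V₀)
    (hdisjC : ∀ c ∈ C, ∀ c' ∈ C, c ≠ c' → Disjoint (T c '' V₀) (T c' '' V₀))
    (hlevel : ∀ c ∈ C, μ (T c '' V₀) = 1 / (C.card : ℝ≥0∞))
    (htowerdisj : ∀ i j : ℕ, i < h → j < h → i ≠ j →
      Disjoint (T (i:ℤ) '' V₀) (T (j:ℤ) '' V₀))
    (htower : ∀ c ∈ C, ∀ c' ∈ C, c' ≤ c →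
      T (c - c') '' V₀ ⊆ ⋃ i ∈ Finset.range h, T (i:ℤ) '' V₀) :
    ∀ A B : Set X, A ⊆ Y → B ⊆ Y → MeasurableSet A → MeasurableSet B →
      ∑ k ∈ Finset.range h, μ (A ∩ T (k:ℤ) '' B) ≤
        2 * min (μ A) (μ B) * ∑ k ∈ Finset.range h, μ (Y ∩ T (k:ℤ) '' Y) := by
  intro A B hAY hBY hA hB
  have hTmeas : ∀ g : ℤ, Measurable (T g) := fun g => (hmp g).measurable
  have hinv : ∀ (g : ℤ) (x : X), T (-g) (T g x) = x := by
    intro g x; rw [← hadd]; simp [hzero]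
  have hinv' : ∀ (g : ℤ) (x : X), T g (T (-g) x) = x := by
    intro g x; rw [← hadd]; simp [hzero]
  have hinj : ∀ g : ℤ, Function.Injective (T g) := by
    intro g x y hxy
    have := congrArg (T (-g)) hxy
    rwa [hinv, hinv] at this
  have himg2 : ∀ (g g' : ℤ) (S : Set X), T (g + g') '' S = T g '' (T g' '' S) := by
    intro g g' S
    rw [← Set.image_comp]
    exact Set.image_congr' (fun x => hadd g g' x)
  have himg0 : ∀ S : Set X, T 0 '' S = S := by
    intro S
    have : T 0 '' S = id '' S := Set.image_congr' (fun x => hzero x)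
    simpa using this
  have hpre : ∀ (g : ℤ) (S : Set X), T g '' S = T (-g) ⁻¹' S := by
    intro g S; ext x
    constructor
    · rintro ⟨y, hy, rfl⟩; simpa [Set.mem_preimage, hinv] using hy
    · intro hx; exact ⟨T (-g) x, hx, hinv' g x⟩
  have hmeasimg : ∀ (g : ℤ) (S : Set X), MeasurableSet S → MeasurableSet (T g '' S) := by
    intro g S hS; rw [hpre]; exact hTmeas (-g) hS
  have hμimg : ∀ (g : ℤ) (S : Set X), MeasurableSet S → μ (T g '' S) = μ S := by
    intro g S hS; rw [hpre]; exact (hmp (-g)).measure_preimage hS.nullMeasurableSet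
  have htransd : ∀ (g : ℤ) (i j : ℕ), i < h → j < h → i ≠ j →
      Disjoint (T (g + (i:ℤ)) '' V₀) (T (g + (j:ℤ)) '' V₀) := by
    intro g i j hi hj hij
    rw [himg2, himg2]
    exact (Set.disjoint_image_iff (hinj g)).2 (htowerdisj i j hi hj hij)
  set n := C.card with hn
  have hn0 : (n : ℝ≥0∞) ≠ 0 := by
    simp [hn, Finset.card_ne_zero_of_mem hCne.choose_spec]
  have hntop : (n : ℝ≥0∞) ≠ ⊤ := ENNReal.natCast_ne_top n
  -- generic upper bound
  have hup : ∀ (ε : ℕ → ℤ),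
      (∀ c ∈ C, ∀ i < h, ∀ j < h, i ≠ j →
        Disjoint (T (c + ε i) '' V₀) (T (c + ε j) '' V₀)) →
      ∀ (A' B' : Set X), B' ⊆ Y → MeasurableSet A' →
      ∑ k ∈ Finset.range h, μ (A' ∩ T (ε k) '' B') ≤ (n : ℝ≥0∞) * μ A' := by
    intro ε hdis A' B' hB'Y hA'
    have step1 : ∀ k, μ (A' ∩ T (ε k) '' B') ≤ ∑ c ∈ C, μ (A' ∩ T (c + ε k) '' V₀) := by
      intro k
      have hBsub : B' ⊆ ⋃ c ∈ C, T c '' V₀ := hbase ▸ hB'Y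
      have hsub : T (ε k) '' B' ⊆ ⋃ c ∈ C, T (c + ε k) '' V₀ := by
        rintro x ⟨y, hy, rfl⟩
        obtain ⟨c, hc, z, hz, rfl⟩ : ∃ c ∈ C, ∃ z ∈ V₀, T c z = y := by
          simpa using hBsub hy
        refine Set.mem_biUnion hc ⟨z, hz, ?_⟩
        rw [add_comm c (ε k), hadd]
      calc μ (A' ∩ T (ε k) '' B') ≤ μ (⋃ c ∈ C, A' ∩ T (c + ε k) '' V₀) := by
            refine measure_mono ?_
            rw [← Set.inter_iUnion₂]
            exact Set.inter_subset_inter_right _ hsub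
        _ ≤ ∑ c ∈ C, μ (A' ∩ T (c + ε k) '' V₀) := measure_biUnion_finset_le _ _
    calc ∑ k ∈ Finset.range h, μ (A' ∩ T (ε k) '' B')
        ≤ ∑ k ∈ Finset.range h, ∑ c ∈ C, μ (A' ∩ T (c + ε k) '' V₀) :=
          Finset.sum_le_sum fun k _ => step1 k
      _ = ∑ c ∈ C, ∑ k ∈ Finset.range h, μ (A' ∩ T (c + ε k) '' V₀) := Finset.sum_comm
      _ ≤ ∑ _c ∈ C, μ A' := by
          refine Finset.sum_le_sum fun c hc => ?_
          have hdisj : (Finset.range h : Set ℕ).PairwiseDisjoint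
              (fun k => A' ∩ T (c + ε k) '' V₀) := by
            intro i hi j hj hij
            simp only [Finset.coe_range, Set.mem_Iio] at hi hj
            exact Disjoint.mono Set.inter_subset_right Set.inter_subset_right
              (hdis c hc i hi j hj hij)
          rw [← measure_biUnion_finset hdisj
            (fun k _ => hA'.inter (hmeasimg _ _ hV₀))]
          exact measure_mono (Set.iUnion₂_subset fun k _ => Set.inter_subset_left)
      _ = (n : ℝ≥0∞) * μ A' := by rw [Finset.sum_const, nsmul_eq_mul]
  -- bound by μ A
  have hdis1 : ∀ c ∈ C, ∀ i < h, ∀ j < h, i ≠ j →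
      Disjoint (T (c + ((i:ℕ):ℤ)) '' V₀) (T (c + ((j:ℕ):ℤ)) '' V₀) :=
    fun c _ i hi j hj hij => htransd c i j hi hj hij
  have hboundA : ∑ k ∈ Finset.range h, μ (A ∩ T (k:ℤ) '' B) ≤ (n : ℝ≥0∞) * μ A :=
    hup (fun k => (k:ℤ)) hdis1 A B hBY hA
  -- flip
  have hflip : ∀ k : ℤ, μ (A ∩ T k '' B) = μ (B ∩ T (-k) '' A) := by
    intro k
    have h1 : T (-k) '' (A ∩ T k '' B) = T (-k) '' A ∩ B := by
      rw [Set.image_inter (hinj (-k)), ← himg2]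
      norm_num [himg0]
    calc μ (A ∩ T k '' B) = μ (T (-k) '' (A ∩ T k '' B)) :=
          (hμimg _ _ (hA.inter (hmeasimg _ _ hB))).symm
      _ = μ (B ∩ T (-k) '' A) := by rw [h1, Set.inter_comm]
  have hdis2 : ∀ c ∈ C, ∀ i < h, ∀ j < h, i ≠ j →
      Disjoint (T (c + -(i:ℤ)) '' V₀) (T (c + -(j:ℤ)) '' V₀) := by
    intro c _ i hi j hj hij
    have e1 : c + -(i:ℤ) = (c - ((h:ℤ) - 1)) + (((h - 1 - i : ℕ)):ℤ) := by omega
    have e2 : c + -(j:ℤ) = (c - ((h:ℤ) - 1)) + (((h - 1 - j : ℕ)):ℤ) := by omega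
    rw [e1, e2]
    exact htransd _ _ _ (by omega) (by omega) (by omega)
  have hboundB : ∑ k ∈ Finset.range h, μ (A ∩ T (k:ℤ) '' B) ≤ (n : ℝ≥0∞) * μ B := by
    calc ∑ k ∈ Finset.range h, μ (A ∩ T (k:ℤ) '' B)
        = ∑ k ∈ Finset.range h, μ (B ∩ T (-(k:ℤ)) '' A) := by
          exact Finset.sum_congr rfl fun k _ => hflip k
      _ ≤ (n : ℝ≥0∞) * μ B := hup (fun k => -(k:ℤ)) hdis2 B A hAY hB
  have hbound : ∑ k ∈ Finset.range h, μ (A ∩ T (k:ℤ) '' B) ≤ (n : ℝ≥0∞) * min (μ A) (μ B) := by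
    rcases min_cases (μ A) (μ B) with ⟨hmin, _⟩ | ⟨hmin, _⟩ <;> rw [hmin]
    · exact hboundA
    · exact hboundB
  -- lower bound for the base correlation sum
  set S' := ∑ k ∈ Finset.range h, μ (Y ∩ T (k:ℤ) '' Y) with hS'
  have hTkY : ∀ k : ℤ, T k '' Y = ⋃ c' ∈ C, T (c' + k) '' V₀ := by
    intro k
    rw [hbase, Set.image_iUnion₂]
    refine Set.iUnion₂_congr fun c' _ => ?_
    rw [add_comm c' k, himg2]
  have hstepA : S' = ∑ c' ∈ C, ∑ k ∈ Finset.range h, μ (Y ∩ T (c' + (k:ℤ)) '' V₀) := by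
    rw [hS', ← Finset.sum_comm]
    refine Finset.sum_congr rfl fun k _ => ?_
    have hdisj : (C : Set ℤ).PairwiseDisjoint (fun c' => Y ∩ T (c' + (k:ℤ)) '' V₀) := by
      intro c₁ h₁ c₂ h₂ hne
      refine Disjoint.mono Set.inter_subset_right Set.inter_subset_right ?_
      rw [add_comm c₁ _, add_comm c₂ _, himg2, himg2]
      exact (Set.disjoint_image_iff (hinj _)).2 (hdisjC c₁ h₁ c₂ h₂ hne)
    rw [← measure_biUnion_finset hdisj (fun c' _ => hYmeas.inter (hmeasimg _ _ hV₀))]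
    congr 1
    rw [← Set.inter_iUnion₂, ← hTkY]
  set m : ℤ → ℕ := fun c' => (C.filter (fun c => c' ≤ c)).card with hm
  have hstepB : ∀ c' ∈ C,
      ((m c' : ℝ≥0∞)) / (n : ℝ≥0∞) ≤ ∑ k ∈ Finset.range h, μ (Y ∩ T (c' + (k:ℤ)) '' V₀) := by
    intro c' hc'
    have hdisj : (Finset.range h : Set ℕ).PairwiseDisjoint
        (fun k => Y ∩ T (c' + (k:ℤ)) '' V₀) := by
      intro i hi j hj hij
      simp only [Finset.coe_range, Set.mem_Iio] at hi hj
      exact Disjoint.mono Set.inter_subset_right Set.inter_subset_right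
        (htransd c' i j hi hj hij)
    rw [← measure_biUnion_finset hdisj (fun k _ => hYmeas.inter (hmeasimg _ _ hV₀))]
    have hsub : (⋃ c ∈ C.filter (fun c => c' ≤ c), T c '' V₀) ⊆
        ⋃ k ∈ Finset.range h, Y ∩ T (c' + (k:ℤ)) '' V₀ := by
      refine Set.iUnion₂_subset fun c hc => ?_
      simp only [Finset.mem_filter] at hc
      obtain ⟨hcC, hle⟩ := hc
      have hY : T c '' V₀ ⊆ Y := by
        rw [hbase]; intro x hx; exact Set.mem_biUnion hcC hx
      have h2 : T c '' V₀ ⊆ ⋃ k ∈ Finset.range h, T (c' + (k:ℤ)) '' V₀ := by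
        have : T c '' V₀ = T c' '' (T (c - c') '' V₀) := by
          rw [← himg2]; ring_nf
        rw [this]
        refine le_trans (Set.image_mono (htower c hcC c' hc' hle)) ?_
        rw [Set.image_iUnion₂]
        exact Set.iUnion₂_mono fun k _ => by rw [← himg2]
      intro x hx
      obtain ⟨k, hk, hxk⟩ : ∃ k ∈ Finset.range h, x ∈ T (c' + (k:ℤ)) '' V₀ := by
        simpa using h2 hx
      exact Set.mem_biUnion hk ⟨hY hx, hxk⟩
    have hdisj2 : ((C.filter (fun c => c' ≤ c)) : Set ℤ).PairwiseDisjoint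
        (fun c => T c '' V₀) := by
      intro c₁ h₁ c₂ h₂ hne
      simp only [Finset.coe_filter, Set.mem_setOf_eq] at h₁ h₂
      exact hdisjC c₁ h₁.1 c₂ h₂.1 hne
    have hval : μ (⋃ c ∈ C.filter (fun c => c' ≤ c), T c '' V₀) = (m c' : ℝ≥0∞) / n := by
      rw [measure_biUnion_finset hdisj2 (fun c _ => hmeasimg _ _ hV₀)]
      have : ∀ c ∈ C.filter (fun c => c' ≤ c), μ (T c '' V₀) = 1 / (n : ℝ≥0∞) := by
        intro c hc
        exact hlevel c (Finset.mem_filter.mp hc).1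
      rw [Finset.sum_congr rfl this, Finset.sum_const, nsmul_eq_mul]
      rw [ENNReal.div_eq_inv_mul, ENNReal.div_eq_inv_mul, mul_one, mul_comm]
    rw [← hval]
    exact measure_mono hsub
  -- combinatorial count
  have hcomb : n * n ≤ 2 * ∑ c' ∈ C, m c' := by
    have h1 : ∀ c' ∈ C, m c' + (C.filter (fun c => c ≤ c')).card = n + 1 := by
      intro c' hc'
      have e : C.filter (fun c => c ≤ c') = insert c' (C.filter (fun c => c < c')) := by
        ext x
        simp only [Finset.mem_filter, Finset.mem_insert]
        constructor
        · rintro ⟨hx, hle⟩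
          rcases lt_or_eq_of_le hle with hlt | heq
          · exact Or.inr ⟨hx, hlt⟩
          · exact Or.inl heq
        · rintro (rfl | ⟨hx, hlt⟩)
          · exact ⟨hc', le_refl _⟩
          · exact ⟨hx, le_of_lt hlt⟩
      have e2 : (C.filter (fun c => c ≤ c')).card = (C.filter (fun c => c < c')).card + 1 := by
        rw [e, Finset.card_insert_of_notMem]
        simp
      have e3 : m c' + (C.filter (fun c => c < c')).card = n := by
        rw [hm]
        have := Finset.card_filter_add_card_filter_not
          (s := C) (p := fun c => c' ≤ c)
        simp only [not_le] at this
        exact this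
      omega
    have h2 : ∑ c' ∈ C, (C.filter (fun c => c ≤ c')).card = ∑ c' ∈ C, m c' := by
      simp only [hm, Finset.card_filter]
      rw [Finset.sum_comm]
    have h3 : ∑ c' ∈ C, (m c' + (C.filter (fun c => c ≤ c')).card) = n * (n + 1) := by
      rw [Finset.sum_congr rfl h1, Finset.sum_const, smul_eq_mul]
    rw [Finset.sum_add_distrib, h2] at h3
    calc n * n ≤ n * (n + 1) := Nat.mul_le_mul_left n (Nat.le_succ n)
      _ = 2 * ∑ c' ∈ C, m c' := by omega
  have hlowS : ((∑ c' ∈ C, m c' : ℕ) : ℝ≥0∞) / (n : ℝ≥0∞) ≤ S' := by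
    rw [hstepA]
    have hc : ((∑ c' ∈ C, m c' : ℕ) : ℝ≥0∞) = ∑ c' ∈ C, ((m c' : ℕ) : ℝ≥0∞) :=
      Nat.cast_sum _ _
    rw [hc, div_eq_mul_inv, Finset.sum_mul]
    refine Finset.sum_le_sum fun c' hc' => ?_
    rw [← div_eq_mul_inv]
    exact hstepB c' hc'
  have hkey : (n : ℝ≥0∞) ≤ 2 * S' := by
    have c1 : (n : ℝ≥0∞) = ((n * n : ℕ) : ℝ≥0∞) / (n : ℝ≥0∞) := by
      push_cast
      rw [mul_div_assoc, ENNReal.div_self hn0 hntop, mul_one]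
    rw [c1]
    calc ((n * n : ℕ) : ℝ≥0∞) / (n : ℝ≥0∞)
        ≤ ((2 * ∑ c' ∈ C, m c' : ℕ) : ℝ≥0∞) / (n : ℝ≥0∞) := by
          exact ENNReal.div_le_div_right (by exact_mod_cast hcomb) _
      _ = 2 * (((∑ c' ∈ C, m c' : ℕ) : ℝ≥0∞) / (n : ℝ≥0∞)) := by
          push_cast
          rw [mul_div_assoc]
      _ ≤ 2 * S' := by gcongr
  calc ∑ k ∈ Finset.range h, μ (A ∩ T (k:ℤ) '' B)
      ≤ (n : ℝ≥0∞) * min (μ A) (μ B) := hbound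
    _ ≤ (2 * S') * min (μ A) (μ B) := mul_le_mul_left hkey _
    _ = 2 * min (μ A) (μ B) * S' := by ring
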